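/- arXiv:2407.21785 — 2 statements merged into one kernel-verified Lean document; each statement's English description precedes it below -/
import Mathlib

section
/- Let G = (S, V, E, π, σ, α) be a restaking graph, D ⊆ V, and suppose (A, B) is an attacking coalition on the graph G ↘ D obtained by deleting the validators D. Then (A, B ∪ D) is an attacking coalition on G. -/
/-- A restaking graph `G = (S, V, E, π, σ, α)`. -/
structure RestakingGraph where
  /-- services -/
  S : Type
  /-- validators -/
  V : Type
  finS : Fintype S
  finV : Fintype V
  /-- edge relation: `E s v` means validator `v` restakes for service `s` -/
  E : S → V → Prop
  /-- profit from corruption -/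
  pi : S → ℝ
  /-- stake -/
  stake : V → ℝ
  /-- attack thresholds -/
  alpha : S → ℝ
  pi_nonneg : ∀ s, 0 ≤ pi s
  stake_nonneg : ∀ v, 0 ≤ stake v
  alpha_pos : ∀ s, 0 < alpha s
  alpha_le_one : ∀ s, alpha s ≤ 1

attribute [instance] RestakingGraph.finS RestakingGraph.finV

namespace RestakingGraph

variable (G : RestakingGraph)

/-- `π_A = Σ_{s ∈ A} π_s` -/
noncomputable def piSum (A : Set G.S) : ℝ := ∑ᶠ s ∈ A, G.pi s

/-- `σ_B = Σ_{v ∈ B} σ_v` -/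
noncomputable def stakeSum (B : Set G.V) : ℝ := ∑ᶠ v ∈ B, G.stake v

/-- `N(s)`: validators adjacent to service `s` -/
def Ns (s : G.S) : Set G.V := {v | G.E s v}

/-- `N(v)`: services adjacent to validator `v` -/
def Nv (v : G.V) : Set G.S := {s | G.E s v}

/-- `N(A)`: validators adjacent to some service of `A` -/
def NA (A : Set G.S) : Set G.V := ⋃ s ∈ A, G.Ns s

/-- `N(C)`: validators adjacent to some service of `C` -/
def NC (C : Set G.S) : Set G.V := ⋃ s ∈ C, G.Ns s

/-- `Γ(C)`: validators exclusive to `C` -/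
def Gamma (C : Set G.S) : Set G.V := {v | G.Nv v ⊆ C}

/-- total stake `σ_V` -/
noncomputable def totalStake : ℝ := G.stakeSum Set.univ

/-- `(A, B)` is an attacking coalition on `G ↘ D` (for `D = ∅`, on `G` itself):
the remaining validators `B` control an `α_s` fraction of the remaining stake of
each `s ∈ A`. -/
def IsCoalition (D : Set G.V) (A : Set G.S) (B : Set G.V) : Prop :=
  Disjoint B D ∧ ∀ s ∈ A, G.alpha s * G.stakeSum (G.Ns s \ D) ≤ G.stakeSum (B ∩ G.Ns s)

/-- `(A, B)` is a valid attack on `G ↘ D`. -/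
def IsValidAttack (D : Set G.V) (A : Set G.S) (B : Set G.V) : Prop :=
  G.IsCoalition D A B ∧ G.stakeSum B < G.piSum A

/-- `(A, B)` is a stable attack on `G ↘ D`. -/
def IsStableAttack (D : Set G.V) (A : Set G.S) (B : Set G.V) : Prop :=
  G.IsValidAttack D A B ∧
    ∀ A' B', A' ⊆ A → B' ⊆ B → G.IsValidAttack D A' B' →
      G.stakeSum (B \ B') < G.piSum (A \ A')

/-- `B_1 ∪ ⋯ ∪ B_{t-1}`: the validators removed before step `t`. -/
def prevUnion {T : ℕ} (B : Fin T → Set G.V) (t : Fin T) : Set G.V :=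
  ⋃ i : Fin T, ⋃ _ : i < t, B i

/-- `(A_1, B_1), …, (A_T, B_T)` is a valid cascade of attacks on `G ↘ D`. -/
def IsCascade (D : Set G.V) {T : ℕ} (A : Fin T → Set G.S) (B : Fin T → Set G.V) : Prop :=
  (∀ i j, i ≠ j → Disjoint (A i) (A j)) ∧
  (∀ i j, i ≠ j → Disjoint (B i) (B j)) ∧
  ∀ t, G.IsValidAttack (D ∪ G.prevUnion B t) (A t) (B t)

/-- `(A_1, B_1), …, (A_T, B_T)` is a cascade of stable attacks on `G ↘ D`. -/
def IsStableCascade (D : Set G.V) {T : ℕ} (A : Fin T → Set G.S) (B : Fin T → Set G.V) : Prop :=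
  (∀ i j, i ≠ j → Disjoint (A i) (A j)) ∧
  (∀ i j, i ≠ j → Disjoint (B i) (B j)) ∧
  ∀ t, G.IsStableAttack (D ∪ G.prevUnion B t) (A t) (B t)

/-- `R_ψ(G)`: worst-case stake loss from a shock of relative size at most `ψ`
followed by an arbitrary valid cascade of attacks. -/
noncomputable def R (ψ : ℝ) : ℝ :=
  ψ + sSup { r : ℝ |
    ∃ (D : Set G.V) (T : ℕ) (A : Fin T → Set G.S) (B : Fin T → Set G.V),
      G.stakeSum D / G.totalStake ≤ ψ ∧ G.IsCascade D A B ∧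
      r = G.stakeSum (⋃ t, B t) / G.totalStake }

/-- `R_ψ(C, G)`: local worst-case stake loss (under stable attacks) for the
coalition of services `C`. -/
noncomputable def Rloc (C : Set G.S) (ψ : ℝ) : ℝ :=
  ψ + sSup { r : ℝ |
    ∃ (D : Set G.V) (T : ℕ) (A : Fin T → Set G.S) (B : Fin T → Set G.V),
      G.stakeSum (D ∩ G.Gamma C) / G.stakeSum (G.Gamma C) ≤ ψ ∧ G.IsStableCascade D A B ∧
      r = G.stakeSum ((⋃ t, B t) ∩ G.Gamma C) / G.stakeSum (G.Gamma C) }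

/-- `G` is secure: no valid attack exists. -/
def Secure : Prop := ∀ A B, ¬ G.IsValidAttack ∅ A B

/-- `G` is secure with `γ`-slack. -/
def SecureWithSlack (γ : ℝ) : Prop :=
  ∀ A B, G.IsCoalition ∅ A B → (1 + γ) * G.piSum A ≤ G.stakeSum B

/-- `(X, Y)` is an attack header on `G`. -/
def IsAttackHeader (X : Set G.S) (Y : Set G.V) : Prop :=
  Y ⊆ G.Gamma X ∧ ∃ B : Set G.V, B ∩ G.Gamma X = ∅ ∧ G.IsCoalition ∅ X (B ∪ Y)

/-- The EigenLayer sufficient condition. -/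
def EigenLayerCond : Prop :=
  ∀ v : G.V,
    (∑ᶠ s ∈ G.Nv v, G.stake v / G.stakeSum (G.Ns s) * (G.pi s / G.alpha s)) ≤ G.stake v

/-- The `γ`-scaled EigenLayer condition. -/
def EigenLayerSlackCond (γ : ℝ) : Prop :=
  ∀ v : G.V,
    (∑ᶠ s ∈ G.Nv v, G.stake v / G.stakeSum (G.Ns s) * ((1 + γ) * G.pi s / G.alpha s))
      ≤ G.stake v

end RestakingGraph

/-- Lemma: adding the deleted validators to a coalition.
If `(A, B)` is an attacking coalition on `G ↘ D`, then `(A, B ∪ D)` is an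
attacking coalition on `G`. -/
theorem coalition_union_deleted
    (G : RestakingGraph) (D : Set G.V) (A : Set G.S) (B : Set G.V)
    (h : G.IsCoalition D A B) :
    G.IsCoalition ∅ A (B ∪ D) := by
  obtain ⟨hBD, hA⟩ := h
  refine ⟨Set.disjoint_empty _, ?_⟩
  intro s hs
  have key := hA s hs
  have h1 : G.stakeSum (G.Ns s \ ∅) = G.stakeSum (G.Ns s \ D) + G.stakeSum (G.Ns s ∩ D) := by
    rw [Set.diff_empty]
    unfold RestakingGraph.stakeSum
    rw [← finsum_mem_union Set.disjoint_sdiff_inter (Set.toFinite _) (Set.toFinite _),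
      Set.diff_union_inter]
  have h2 : G.stakeSum ((B ∪ D) ∩ G.Ns s) = G.stakeSum (B ∩ G.Ns s) + G.stakeSum (D ∩ G.Ns s) := by
    unfold RestakingGraph.stakeSum
    rw [← finsum_mem_union (hBD.mono (Set.inter_subset_left) (Set.inter_subset_left))
      (Set.toFinite _) (Set.toFinite _), Set.union_inter_distrib_right]
  have h3 : G.alpha s * G.stakeSum (G.Ns s ∩ D) ≤ G.stakeSum (D ∩ G.Ns s) := by
    rw [Set.inter_comm]
    have hnn : 0 ≤ G.stakeSum (D ∩ G.Ns s) :=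
      finsum_nonneg fun v => finsum_nonneg fun _ => G.stake_nonneg v
    nlinarith [G.alpha_pos s, G.alpha_le_one s]
  rw [h1, h2, mul_add]
  linarith
end

section
/- Let G = (S, V, E, π, σ, α) be a restaking graph and let (A_1, B_1), …, (A_T, B_T) be a valid cascade of attacks on G. Then the pair (A_1 ∪ … ∪ A_T, B_1 ∪ … ∪ B_T) is a valid attack on G. -/
section Aux
open RestakingGraph

lemma stakeSum_nonneg (G : RestakingGraph) (X : Set G.V) : 0 ≤ G.stakeSum X := by
  unfold RestakingGraph.stakeSum
  rw [finsum_mem_def]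
  exact finsum_nonneg fun v => Set.indicator_nonneg (fun v _ => G.stake_nonneg v) v

lemma stakeSum_union_disjoint (G : RestakingGraph) (X Y : Set G.V) (h : Disjoint X Y) :
    G.stakeSum (X ∪ Y) = G.stakeSum X + G.stakeSum Y := by
  unfold RestakingGraph.stakeSum
  exact finsum_mem_union h (Set.toFinite _) (Set.toFinite _)

lemma stakeSum_mono (G : RestakingGraph) {X Y : Set G.V} (h : X ⊆ Y) :
    G.stakeSum X ≤ G.stakeSum Y := by
  have : Y = X ∪ (Y \ X) := by rw [Set.union_diff_cancel h]
  rw [this, stakeSum_union_disjoint G _ _ Set.disjoint_sdiff_right]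
  linarith [stakeSum_nonneg G (Y \ X)]

end Aux

/-- Corollary: a valid cascade combines into a single valid attack.
If `(A_1, B_1), …, (A_T, B_T)` is a valid cascade of attacks on `G`, then
`(A_1 ∪ ⋯ ∪ A_T, B_1 ∪ ⋯ ∪ B_T)` is a valid attack on `G`. -/
theorem cascade_combines
    (G : RestakingGraph) (T : ℕ) (hT : 0 < T)
    (A : Fin T → Set G.S) (B : Fin T → Set G.V)
    (h : G.IsCascade ∅ A B) :
    G.IsValidAttack ∅ (⋃ t, A t) (⋃ t, B t) := by
  obtain ⟨hA, hB, hv⟩ := h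
  refine ⟨⟨disjoint_bot_right, ?_⟩, ?_⟩
  · intro s hs
    simp only [Set.mem_iUnion] at hs
    obtain ⟨t, hst⟩ := hs
    have hc := (hv t).1.2 s hst
    simp only [Set.empty_union] at hc
    -- decompose N(s)
    have hNs : G.Ns s = (G.Ns s \ G.prevUnion B t) ∪ (G.prevUnion B t ∩ G.Ns s) := by
      ext v; by_cases hvp : v ∈ G.prevUnion B t <;> simp [hvp]
    have h1 : G.stakeSum (G.Ns s \ ∅)
        ≤ G.stakeSum (G.Ns s \ G.prevUnion B t) + G.stakeSum (G.prevUnion B t ∩ G.Ns s) := by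
      rw [Set.diff_empty]
      nth_rewrite 1 [hNs]
      rw [stakeSum_union_disjoint G _ _
        (Set.disjoint_of_subset_right Set.inter_subset_left Set.disjoint_sdiff_left)]
    have halpha1 := G.alpha_le_one s
    have halpha0 := (G.alpha_pos s).le
    have h2 : G.alpha s * G.stakeSum (G.Ns s \ ∅)
        ≤ G.stakeSum (B t ∩ G.Ns s) + G.stakeSum (G.prevUnion B t ∩ G.Ns s) := by
      calc G.alpha s * G.stakeSum (G.Ns s \ ∅)
          ≤ G.alpha s * G.stakeSum (G.Ns s \ G.prevUnion B t)
              + G.alpha s * G.stakeSum (G.prevUnion B t ∩ G.Ns s) := by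
            rw [← mul_add]; exact mul_le_mul_of_nonneg_left h1 halpha0
        _ ≤ G.stakeSum (B t ∩ G.Ns s) + G.stakeSum (G.prevUnion B t ∩ G.Ns s) := by
            refine add_le_add hc ?_
            nlinarith [stakeSum_nonneg G (G.prevUnion B t ∩ G.Ns s)]
    refine h2.trans ?_
    have hdisj : Disjoint (B t ∩ G.Ns s) (G.prevUnion B t ∩ G.Ns s) := by
      have := (hv t).1.1
      simp only [Set.empty_union] at this
      exact Set.disjoint_of_subset Set.inter_subset_left Set.inter_subset_left this
    rw [← stakeSum_union_disjoint G _ _ hdisj]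
    apply stakeSum_mono
    rw [← Set.union_inter_distrib_right]
    apply Set.inter_subset_inter_left
    apply Set.union_subset (Set.subset_iUnion _ t)
    intro v hvp
    simp only [RestakingGraph.prevUnion, Set.mem_iUnion] at hvp
    obtain ⟨i, _, hvi⟩ := hvp
    exact Set.mem_iUnion.2 ⟨i, hvi⟩
  · -- profit
    have hBsum : G.stakeSum (⋃ t, B t) = ∑ t, G.stakeSum (B t) := by
      unfold RestakingGraph.stakeSum
      rw [finsum_mem_iUnion (fun i j hij => hB i j hij) (fun i => Set.toFinite _)]
      exact finsum_eq_sum_of_fintype _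
    have hAsum : G.piSum (⋃ t, A t) = ∑ t, G.piSum (A t) := by
      unfold RestakingGraph.piSum
      rw [finsum_mem_iUnion (fun i j hij => hA i j hij) (fun i => Set.toFinite _)]
      exact finsum_eq_sum_of_fintype _
    rw [hBsum, hAsum]
    apply Finset.sum_lt_sum_of_nonempty ⟨⟨0, hT⟩, Finset.mem_univ _⟩
    intro t _
    exact (hv t).2
end
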